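/- Let S be a non-constant complex rational function, and let T(z) = (z − i)/(z + i). Then the bivariate polynomial 𝔈_{T∘S}(x, y) is irreducible over ℂ if and only if the bivariate polynomial E_{S, S̄}(x, y) is irreducible over ℂ, where S̄ denotes the rational function obtained from S by conjugating all coefficients. -/

import Mathlib

open Polynomial

/-- The lemniscate of a rational function `P`: the set of `z ∈ ℂ` at which `P` has
no pole and `|P(z)| = 1`. -/
noncomputable def RatFunc.lemniscate (P : RatFunc ℂ) : Set ℂ :=
  {z : ℂ | P.denom.eval z ≠ 0 ∧ ‖P.eval (RingHom.id ℂ) z‖ = 1}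

/-- The degree of a rational function `P = p/q` (with `p`, `q` coprime):
`max (deg p) (deg q)`. -/
noncomputable def RatFunc.deg (P : RatFunc ℂ) : ℕ :=
  max P.num.natDegree P.denom.natDegree

/-- A rational function is non-constant. -/
def RatFunc.IsNonConst (P : RatFunc ℂ) : Prop := ¬ ∃ c : ℂ, P = RatFunc.C c

/-- Composition of rational functions: `B ∘ W`. -/
noncomputable def RatFunc.comp (B W : RatFunc ℂ) : RatFunc ℂ :=
  RatFunc.eval (algebraMap ℂ (RatFunc ℂ)) W B

/-- A quotient of finite Blaschke products: a non-constant rational function `B`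
with no poles on the unit circle and `|B(z)| = 1` for all `|z| = 1`. -/
def RatFunc.IsBlaschkeQuotient (B : RatFunc ℂ) : Prop :=
  B.IsNonConst ∧ ∀ z : ℂ, ‖z‖ = 1 →
    B.denom.eval z ≠ 0 ∧ ‖B.eval (RingHom.id ℂ) z‖ = 1

/-- `𝔈_P(x, y) = p₁(x)·p̄₁(y) − p₂(x)·p̄₂(y)` where `P = p₁/p₂` in lowest terms:
the numerator of `P(x) − 1/P̄(y)`. -/
noncomputable def RatFunc.EE (P : RatFunc ℂ) : MvPolynomial (Fin 2) ℂ :=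
  Polynomial.aeval (MvPolynomial.X 0 : MvPolynomial (Fin 2) ℂ) P.num *
    Polynomial.aeval (MvPolynomial.X 1 : MvPolynomial (Fin 2) ℂ)
      (P.num.map (starRingEnd ℂ)) -
  Polynomial.aeval (MvPolynomial.X 0 : MvPolynomial (Fin 2) ℂ) P.denom *
    Polynomial.aeval (MvPolynomial.X 1 : MvPolynomial (Fin 2) ℂ)
      (P.denom.map (starRingEnd ℂ))

/-- `L_P(x, y) = 𝔈_P(x + iy, x − iy)`: the numerator of `P(x+iy)·P̄(x−iy) − 1`. -/
noncomputable def RatFunc.LL (P : RatFunc ℂ) : MvPolynomial (Fin 2) ℂ :=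
  MvPolynomial.bind₁
    ![(MvPolynomial.X 0 : MvPolynomial (Fin 2) ℂ) + MvPolynomial.C Complex.I * MvPolynomial.X 1,
      (MvPolynomial.X 0 : MvPolynomial (Fin 2) ℂ) - MvPolynomial.C Complex.I * MvPolynomial.X 1]
    P.EE

/-- `E_{S,S̄}(x, y) = s₁(x)·s̄₂(y) − s̄₁(y)·s₂(x)` where `S = s₁/s₂` in lowest terms:
the numerator of `S(x) − S̄(y)`, with `S̄` the coefficient-wise conjugate of `S`. -/
noncomputable def RatFunc.ESconj (S : RatFunc ℂ) : MvPolynomial (Fin 2) ℂ :=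
  Polynomial.aeval (MvPolynomial.X 0 : MvPolynomial (Fin 2) ℂ) S.num *
    Polynomial.aeval (MvPolynomial.X 1 : MvPolynomial (Fin 2) ℂ)
      (S.denom.map (starRingEnd ℂ)) -
  Polynomial.aeval (MvPolynomial.X 1 : MvPolynomial (Fin 2) ℂ)
      (S.num.map (starRingEnd ℂ)) *
    Polynomial.aeval (MvPolynomial.X 0 : MvPolynomial (Fin 2) ℂ) S.denom

/-- The Cayley transform `T(z) = (z − i)/(z + i)` as a rational function. -/
noncomputable def cayleyT : RatFunc ℂ :=
  (RatFunc.X - RatFunc.C Complex.I) / (RatFunc.X + RatFunc.C Complex.I)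


private lemma ratfunc_num_denom_eq {p q : ℂ[X]} (hq : q.Monic) (hc : IsCoprime p q) :
    (algebraMap ℂ[X] (RatFunc ℂ) p / algebraMap ℂ[X] (RatFunc ℂ) q).num = p ∧
    (algebraMap ℂ[X] (RatFunc ℂ) p / algebraMap ℂ[X] (RatFunc ℂ) q).denom = q := by
  set x := algebraMap ℂ[X] (RatFunc ℂ) p / algebraMap ℂ[X] (RatFunc ℂ) q with hx
  have key : x.num * q = p * x.denom := (RatFunc.num_mul_eq_mul_denom_iff hq.ne_zero).mpr hx
  have h1 : x.denom ∣ q := by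
    have h : x.denom ∣ x.num * q := key ▸ Dvd.intro_left _ rfl
    exact (RatFunc.isCoprime_num_denom x).symm.dvd_of_dvd_mul_left h
  have h2 : q ∣ x.denom := by
    have h : q ∣ p * x.denom := key ▸ dvd_mul_left q x.num
    exact hc.symm.dvd_of_dvd_mul_left h
  have hdenom : x.denom = q :=
    Polynomial.eq_of_monic_of_associated (RatFunc.monic_denom x) hq (associated_of_dvd_dvd h1 h2)
  refine ⟨?_, hdenom⟩
  have key2 := key
  rw [hdenom] at key2
  exact mul_right_cancel₀ hq.ne_zero key2

private lemma coprime_cayley : IsCoprime (X - C Complex.I : ℂ[X]) (X + C Complex.I) := by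
  refine ⟨C (Complex.I/2), -C (Complex.I/2), ?_⟩
  have h : ((Complex.I/2) * (Complex.I) * (-2) : ℂ) = 1 := by
    have := Complex.I_mul_I
    field_simp
    simp [Complex.I_sq]
  calc C (Complex.I/2) * (X - C Complex.I) + -C (Complex.I/2) * (X + C Complex.I)
      = C ((Complex.I/2) * Complex.I * (-2)) := by
        rw [C_mul, C_mul, map_neg, map_ofNat]; ring
    _ = 1 := by rw [h, C_1]

private lemma cayley_eq : cayleyT = algebraMap ℂ[X] (RatFunc ℂ) (X - C Complex.I) /
    algebraMap ℂ[X] (RatFunc ℂ) (X + C Complex.I) := by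
  simp [cayleyT, RatFunc.algebraMap_C, RatFunc.algebraMap_X]

private lemma cayley_comp (S : RatFunc ℂ) :
    cayleyT.comp S = (S - algebraMap ℂ[X] (RatFunc ℂ) (C Complex.I)) /
      (S + algebraMap ℂ[X] (RatFunc ℂ) (C Complex.I)) := by
  have hnum : cayleyT.num = X - C Complex.I := by
    rw [cayley_eq]; exact (ratfunc_num_denom_eq (monic_X_add_C _) coprime_cayley).1
  have hden : cayleyT.denom = X + C Complex.I := by
    rw [cayley_eq]; exact (ratfunc_num_denom_eq (monic_X_add_C _) coprime_cayley).2
  rw [RatFunc.comp, RatFunc.eval, hnum, hden]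
  simp [Polynomial.eval₂_sub, Polynomial.eval₂_add,
    IsScalarTower.algebraMap_apply ℂ ℂ[X] (RatFunc ℂ)]

private lemma B_ne_zero (S : RatFunc ℂ) (hS : S.IsNonConst) :
    S.num + C Complex.I * S.denom ≠ 0 := by
  intro h
  apply hS
  have h' := RatFunc.isCoprime_num_denom S
  have hd : S.denom ∣ S.num := ⟨-C Complex.I, by linear_combination h⟩
  have hu : IsUnit S.denom := h'.isUnit_of_dvd' hd dvd_rfl
  have hd1 : S.denom = 1 := (RatFunc.monic_denom S).eq_one_of_isUnit hu
  rw [hd1] at h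
  have hn : S.num = -C Complex.I := by linear_combination h
  refine ⟨-Complex.I, ?_⟩
  rw [← S.num_div_denom, hd1, hn]
  simp [RatFunc.algebraMap_C]

private lemma coprime_AB (S : RatFunc ℂ) :
    IsCoprime (S.num - C Complex.I * S.denom) (S.num + C Complex.I * S.denom) := by
  have h := RatFunc.isCoprime_num_denom S
  have hA : IsCoprime (S.num - C Complex.I * S.denom) S.denom := by
    have := h.add_mul_left_left (-(C Complex.I))
    rwa [show S.num + S.denom * -(C Complex.I) = S.num - C Complex.I * S.denom by ring] at this
  have hu : IsUnit (C (2 * Complex.I) : ℂ[X]) := by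
    rw [Polynomial.isUnit_C]
    exact isUnit_iff_ne_zero.2 (by simp [Complex.I_ne_zero])
  have hAc : IsCoprime (S.num - C Complex.I * S.denom) (C (2 * Complex.I) * S.denom) :=
    (isCoprime_mul_unit_left_right hu _ _).2 hA
  have := hAc.add_mul_left_right 1
  rwa [show C (2 * Complex.I) * S.denom + (S.num - C Complex.I * S.denom) * 1
      = S.num + C Complex.I * S.denom by
    rw [show (2 : ℂ) * Complex.I = Complex.I + Complex.I by ring, C_add]; ring] at this

private lemma comp_num_denom (S : RatFunc ℂ) (hS : S.IsNonConst) :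
    (cayleyT.comp S).num = (S.num - C Complex.I * S.denom) *
        C (S.num + C Complex.I * S.denom).leadingCoeff⁻¹ ∧
    (cayleyT.comp S).denom = (S.num + C Complex.I * S.denom) *
        C (S.num + C Complex.I * S.denom).leadingCoeff⁻¹ := by
  set n := S.num with hn
  set d := S.denom with hd
  set B : ℂ[X] := n + C Complex.I * d with hBdef
  set A : ℂ[X] := n - C Complex.I * d with hAdef
  have hB : B ≠ 0 := B_ne_zero S hS
  have ha : B.leadingCoeff ≠ 0 := leadingCoeff_ne_zero.2 hB
  have ha' : (B.leadingCoeff⁻¹ : ℂ) ≠ 0 := inv_ne_zero ha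
  have hCa : (C B.leadingCoeff⁻¹ : ℂ[X]) ≠ 0 := by simpa using ha'
  have hdz : d ≠ 0 := S.denom_ne_zero
  have hmd : algebraMap ℂ[X] (RatFunc ℂ) d ≠ 0 := RatFunc.algebraMap_ne_zero hdz
  have hmB : algebraMap ℂ[X] (RatFunc ℂ) B ≠ 0 := RatFunc.algebraMap_ne_zero hB
  have hmC : algebraMap ℂ[X] (RatFunc ℂ) (C B.leadingCoeff⁻¹) ≠ 0 :=
    RatFunc.algebraMap_ne_zero hCa
  have key : cayleyT.comp S =
      algebraMap ℂ[X] (RatFunc ℂ) (A * C B.leadingCoeff⁻¹) /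
        algebraMap ℂ[X] (RatFunc ℂ) (B * C B.leadingCoeff⁻¹) := by
    rw [cayley_comp]
    conv_lhs => rw [← S.num_div_denom, ← hn, ← hd]
    have e1 : (algebraMap ℂ[X] (RatFunc ℂ) n / algebraMap ℂ[X] (RatFunc ℂ) d -
        algebraMap ℂ[X] (RatFunc ℂ) (C Complex.I)) =
        algebraMap ℂ[X] (RatFunc ℂ) A / algebraMap ℂ[X] (RatFunc ℂ) d := by
      rw [hAdef, map_sub, map_mul]
      field_simp
      try ring
    have e2 : (algebraMap ℂ[X] (RatFunc ℂ) n / algebraMap ℂ[X] (RatFunc ℂ) d +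
        algebraMap ℂ[X] (RatFunc ℂ) (C Complex.I)) =
        algebraMap ℂ[X] (RatFunc ℂ) B / algebraMap ℂ[X] (RatFunc ℂ) d := by
      rw [hBdef, map_add, map_mul]
      field_simp
      try ring
    rw [e1, e2, map_mul, map_mul]
    rw [div_eq_div_iff (div_ne_zero hmB hmd) (mul_ne_zero hmB hmC)]
    field_simp
  have hmonic : (B * C B.leadingCoeff⁻¹).Monic := monic_mul_leadingCoeff_inv hB
  have hcop : IsCoprime (A * C B.leadingCoeff⁻¹) (B * C B.leadingCoeff⁻¹) := by
    have hu : IsUnit (C B.leadingCoeff⁻¹ : ℂ[X]) := by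
      rw [Polynomial.isUnit_C]; exact isUnit_iff_ne_zero.2 ha'
    exact (isCoprime_mul_unit_right hu _ _).2 (coprime_AB S)
  rw [key]
  exact ratfunc_num_denom_eq hmonic hcop

theorem EE_comp_cayley_irreducible_iff (S : RatFunc ℂ) (hS : S.IsNonConst) :
    Irreducible (cayleyT.comp S).EE ↔ Irreducible S.ESconj := by
  classical
  obtain ⟨hnum, hden⟩ := comp_num_denom S hS
  set a := (S.num + C Complex.I * S.denom).leadingCoeff with hadef
  have hB : S.num + C Complex.I * S.denom ≠ 0 := B_ne_zero S hS
  have ha : a ≠ 0 := leadingCoeff_ne_zero.2 hB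
  set c : ℂ := a⁻¹ * (starRingEnd ℂ a)⁻¹ * (2 * Complex.I) with hcdef
  have hc : c ≠ 0 := by
    apply mul_ne_zero (mul_ne_zero (inv_ne_zero ha) (inv_ne_zero (by simpa using ha)))
    simp [Complex.I_ne_zero]
  have hEE : (cayleyT.comp S).EE = MvPolynomial.C c * S.ESconj := by
    rw [RatFunc.EE, RatFunc.ESconj, hnum, hden]
    simp only [Polynomial.map_mul, Polynomial.map_sub, Polynomial.map_add, Polynomial.map_C,
      Polynomial.map_X, map_mul, map_sub, map_add, Polynomial.aeval_C, Polynomial.aeval_X,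
      MvPolynomial.algebraMap_eq, hcdef]
    simp only [map_inv₀, Complex.conj_I, map_neg, map_ofNat]
    ring
  have hassoc : Associated S.ESconj (cayleyT.comp S).EE := by
    refine ⟨(IsUnit.map (MvPolynomial.C : ℂ →+* MvPolynomial (Fin 2) ℂ)
      (isUnit_iff_ne_zero.2 hc)).unit, ?_⟩
    rw [hEE]
    simp [mul_comm]
  exact hassoc.symm.irreducible_iff
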